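/- For all real intervals J₁ and J₂ with J₁ ⊆ J₂, the operators on the Fock space 𝓕 satisfy the nest relations v^{⟨1_{J₁},1_{J₂}⟩}·E_{J₁} ∘ E_{J₂} = v^{⟨1_{J₂},1_{J₁}⟩}·E_{J₂} ∘ E_{J₁} and v^{⟨1_{J₁},1_{J₂}⟩}·F_{J₁} ∘ F_{J₂} = v^{⟨1_{J₂},1_{J₁}⟩}·F_{J₂} ∘ F_{J₁} as K-linear endomorphisms of 𝓕. -/

import Mathlib

noncomputable section
open Function
open scoped Classical

/-- The `ℕ`-valued indicator function of the interval `[a, b)`. -/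
def ind (a b : ℝ) : ℝ → ℕ := (Set.Ico a b).indicator fun _ => 1

/-- A real pyramid: a function `p : ℝ → ℕ` vanishing outside a bounded set, maximal at `0`,
nondecreasing on `(-∞, 0]`, nonincreasing on `[0, ∞)`, right-continuous and piecewise
constant with finitely many discontinuities, and with jumps of size at most 1
(`p₋(x)` is the left limit of `p` at `x`). -/
def IsRealPyramid (p : ℝ → ℕ) : Prop :=
  (∃ M : ℝ, ∀ x : ℝ, M ≤ |x| → p x = 0) ∧
  (∀ x, p x ≤ p 0) ∧
  (∀ ⦃x y : ℝ⦄, x ≤ y → y ≤ 0 → p x ≤ p y) ∧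
  (∀ ⦃x y : ℝ⦄, 0 ≤ x → x ≤ y → p y ≤ p x) ∧
  (∀ x, ContinuousWithinAt p (Set.Ici x) x) ∧
  {x : ℝ | ¬ ContinuousAt p x}.Finite ∧
  (∀ x, |(p x : ℤ) - ((Function.leftLim p x : ℕ) : ℤ)| ≤ 1)

/-- The interval `[a, b)` is addable for `p` if `p + 1_{[a,b)}` is again a real pyramid. -/
def Addable (p : ℝ → ℕ) (a b : ℝ) : Prop := IsRealPyramid (fun x => p x + ind a b x)

/-- The interval `[a, b)` is removable for `p` if `p ≥ 1` on `[a, b)` and `p − 1_{[a,b)}`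
is again a real pyramid. -/
def Removable (p : ℝ → ℕ) (a b : ℝ) : Prop :=
  (∀ x ∈ Set.Ico a b, 1 ≤ p x) ∧ IsRealPyramid (fun x => p x - ind a b x)

/-- `n_J(p)`: `1` if `J = [a,b)` is addable for `p`, `−1` if removable, `0` otherwise. -/
def nJ (p : ℝ → ℕ) (a b : ℝ) : ℤ :=
  if Addable p a b then 1 else if Removable p a b then -1 else 0

/-- The base field `K = ℚ(t)`. -/
abbrev K : Type := RatFunc ℚ

/-- The variable `t ∈ K` (playing the role of `υ^{1/2}`). -/
def tK : K := RatFunc.X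

/-- The quantum parameter `v := t²`. -/
def vK : K := tK ^ 2

/-- The type of real pyramids. -/
def Pyr : Type := {p : ℝ → ℕ // IsRealPyramid p}

/-- The Fock space: the `K`-vector space with basis `|p⟩` indexed by real pyramids. -/
abbrev Fock : Type := Pyr →₀ K

/-- `E_J |p⟩ = −t·(−v)^{p(b)−p(a)} |p − 1_J⟩` if `J = [a,b)` is removable for `p`,
and `0` otherwise. -/
def Evec (a b : ℝ) (p : Pyr) : Fock :=
  if h : Removable p.1 a b then
    Finsupp.single ⟨fun x => p.1 x - ind a b x, h.2⟩
      (-tK * (-vK) ^ ((p.1 b : ℤ) - (p.1 a : ℤ)))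
  else 0

/-- `F_J |p⟩ = t·(−v)^{p(a)−p(b)} |p + 1_J⟩` if `J = [a,b)` is addable for `p`,
and `0` otherwise. -/
def Fvec (a b : ℝ) (p : Pyr) : Fock :=
  if h : Addable p.1 a b then
    Finsupp.single ⟨fun x => p.1 x + ind a b x, h⟩
      (tK * (-vK) ^ ((p.1 a : ℤ) - (p.1 b : ℤ)))
  else 0

/-- The `K`-linear operator `E_J` on the Fock space. -/
def Eop (a b : ℝ) : Fock →ₗ[K] Fock :=
  Finsupp.lsum K fun p => LinearMap.toSpanSingleton K Fock (Evec a b p)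

/-- The `K`-linear operator `F_J` on the Fock space. -/
def Fop (a b : ℝ) : Fock →ₗ[K] Fock :=
  Finsupp.lsum K fun p => LinearMap.toSpanSingleton K Fock (Fvec a b p)

/-- The `K`-linear operator `K_J` on the Fock space: `K_J |p⟩ = v^{n_J(p)} |p⟩`. -/
def Kop (a b : ℝ) : Fock →ₗ[K] Fock :=
  Finsupp.lsum K fun p =>
    LinearMap.toSpanSingleton K Fock (Finsupp.single p (vK ^ (nJ p.1 a b)))

/-- The `K`-linear operator `K_J⁻¹` on the Fock space: `K_J⁻¹ |p⟩ = v^{−n_J(p)} |p⟩`. -/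
def Kinvop (a b : ℝ) : Fock →ₗ[K] Fock :=
  Finsupp.lsum K fun p =>
    LinearMap.toSpanSingleton K Fock (Finsupp.single p (vK ^ (-nJ p.1 a b)))

/-- The `ℤ`-valued indicator function of the interval `[a, b)`. -/
def indZ (a b : ℝ) : ℝ → ℤ := (Set.Ico a b).indicator fun _ => 1

/-- The Euler-form pairing `⟨f, g⟩ = Σ_x f₋(x) (g₋(x) − g(x))` for integer-valued step
functions, as a finitely supported sum over `x ∈ ℝ`. -/
def pairZ (f g : ℝ → ℤ) : ℤ :=
  ∑ᶠ x : ℝ, Function.leftLim f x * (Function.leftLim g x - g x)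

section Aux
open Set Filter Topology

lemma ind_one {a b x : ℝ} (h1 : a ≤ x) (h2 : x < b) : ind a b x = 1 :=
  Set.indicator_of_mem (Set.mem_Ico.2 ⟨h1, h2⟩) _

lemma ind_zero {a b x : ℝ} (h : x < a ∨ b ≤ x) : ind a b x = 0 := by
  refine Set.indicator_of_notMem (fun hx => ?_) _
  rcases h with h | h
  · exact absurd hx.1 (not_le.2 h)
  · exact absurd hx.2 (not_lt.2 h)

lemma ind_le_one (a b x : ℝ) : ind a b x ≤ 1 := by
  by_cases h : a ≤ x ∧ x < b
  · rw [ind_one h.1 h.2]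
  · rcases not_and_or.1 h with h | h
    · rw [ind_zero (Or.inl (not_le.1 h))]; exact Nat.zero_le 1
    · rw [ind_zero (Or.inr (not_lt.1 h))]; exact Nat.zero_le 1

/-- the left-limit value of `ind a b` at `x`. -/
def indL (a b x : ℝ) : ℕ := if a < x ∧ x ≤ b then 1 else 0

lemma cwa_iff {f : ℝ → ℕ} {x : ℝ} :
    ContinuousWithinAt f (Set.Ici x) x ↔ ∀ᶠ y in 𝓝[≥] x, f y = f x := by
  unfold ContinuousWithinAt
  rw [nhds_discrete ℕ, Filter.tendsto_pure]

lemma ca_iff {f : ℝ → ℕ} {x : ℝ} :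
    ContinuousAt f x ↔ ∀ᶠ y in 𝓝 x, f y = f x := by
  unfold ContinuousAt
  rw [nhds_discrete ℕ, Filter.tendsto_pure]

lemma ind_right (a b x : ℝ) : ∀ᶠ y in 𝓝[≥] x, ind a b y = ind a b x := by
  rcases lt_or_ge x a with h | h
  · filter_upwards [Ico_mem_nhdsGE_of_mem ⟨le_refl x, h⟩] with y hy
    rw [ind_zero (Or.inl hy.2), ind_zero (Or.inl h)]
  rcases lt_or_ge x b with h' | h'
  · filter_upwards [Ico_mem_nhdsGE_of_mem ⟨le_refl x, h'⟩] with y hy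
    rw [ind_one (h.trans hy.1) hy.2, ind_one h h']
  · filter_upwards [self_mem_nhdsWithin] with y hy
    rw [ind_zero (Or.inr (h'.trans hy)), ind_zero (Or.inr h')]

lemma ind_nhds {a b x : ℝ} (ha : x ≠ a) (hb : x ≠ b) :
    ∀ᶠ y in 𝓝 x, ind a b y = ind a b x := by
  rcases lt_or_ge x a with h | h
  · filter_upwards [Iio_mem_nhds h] with y hy
    rw [ind_zero (Or.inl hy), ind_zero (Or.inl h)]
  rcases lt_or_ge x b with h' | h'
  · have h : a < x := lt_of_le_of_ne h (Ne.symm ha)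
    filter_upwards [Ioo_mem_nhds h h'] with y hy
    rw [ind_one hy.1.le hy.2, ind_one h.le h']
  · have h' : b < x := lt_of_le_of_ne h' (Ne.symm hb)
    filter_upwards [Ioi_mem_nhds h'] with y hy
    rw [ind_zero (Or.inr hy.le), ind_zero (Or.inr h'.le)]

lemma leftLim_eq_const {f : ℝ → ℕ} {x₀ x : ℝ} (h : x₀ < x) {c : ℕ}
    (hc : ∀ y ∈ Set.Ioo x₀ x, f y = c) : Function.leftLim f x = c := by
  apply leftLim_eq_of_tendsto
  rw [nhds_discrete ℕ, Filter.tendsto_pure]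
  filter_upwards [Ioo_mem_nhdsLT_of_mem ⟨h, le_refl x⟩] with y hy using hc y hy

/-- near-left constancy of a finite-discontinuity right-continuous ℕ-valued function -/
lemma exists_leftLim_const {p : ℝ → ℕ} (hfin : {x : ℝ | ¬ ContinuousAt p x}.Finite) (x : ℝ) :
    ∃ x₀ < x, ∀ y ∈ Set.Ioo x₀ x, p y = Function.leftLim p x := by
  obtain ⟨x₀, hx₀, hcont⟩ : ∃ x₀ < x, ∀ y ∈ Set.Ioo x₀ x, ContinuousAt p y := by
    set F : Finset ℝ := insert (x - 1) (hfin.toFinset.filter (fun y => y < x)) with hF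
    have hne : F.Nonempty := ⟨x - 1, Finset.mem_insert_self _ _⟩
    refine ⟨F.max' hne, ?_, ?_⟩
    · apply Finset.max'_lt_iff F hne |>.2
      intro y hy
      rcases Finset.mem_insert.1 hy with rfl | hy
      · linarith
      · exact (Finset.mem_filter.1 hy).2
    · intro y hy
      by_contra hc
      have : y ∈ F := Finset.mem_insert_of_mem (by
        simp only [Finset.mem_filter, Set.Finite.mem_toFinset]
        exact ⟨hc, hy.2⟩)
      exact absurd (Finset.le_max' F y this) (not_le.2 hy.1)
  have hmid : x₀ < (x₀ + x) / 2 ∧ (x₀ + x) / 2 < x := ⟨by linarith, by linarith⟩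
  set c := p ((x₀ + x) / 2) with hc
  have hconst : ∀ y ∈ Set.Ioo x₀ x, p y = c := by
    intro y hy
    exact IsPreconnected.constant isPreconnected_Ioo
      (fun z hz => (hcont z hz).continuousWithinAt) hy ⟨hmid.1, hmid.2⟩
  have : Function.leftLim p x = c := leftLim_eq_const hx₀ hconst
  exact ⟨x₀, hx₀, fun y hy => by rw [hconst y hy, this]⟩

lemma ind_left (a b x : ℝ) :
    ∃ x₀ < x, ∀ y ∈ Set.Ioo x₀ x, ind a b y = indL a b x := by
  classical
  refine ⟨max (x - 1) (max (if a < x then a else x - 1) (if b < x then b else x - 1)), ?_, ?_⟩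
  · simp only [max_lt_iff]
    refine ⟨by linarith, ?_, ?_⟩ <;> split <;> first | assumption | linarith
  · rintro y ⟨hy1, hy2⟩
    simp only [max_lt_iff] at hy1
    obtain ⟨-, hya, hyb⟩ := hy1
    unfold indL
    by_cases hax : a < x
    · rw [if_pos hax] at hya
      by_cases hbx : b < x
      · rw [if_pos hbx] at hyb
        rw [ind_zero (Or.inr hyb.le), if_neg (by intro h; linarith [h.2])]
      · push_neg at hbx
        rw [ind_one hya.le (lt_of_lt_of_le hy2 hbx), if_pos ⟨hax, hbx⟩]
    · push_neg at hax
      rw [ind_zero (Or.inl (lt_of_lt_of_le hy2 hax)), if_neg (by intro h; linarith [h.1])]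

/-- master left-limit computation for combinations of a pyramid-like function and two
indicator functions. -/
lemma leftLim_combo {p : ℝ → ℕ} (hfin : {x : ℝ | ¬ ContinuousAt p x}.Finite)
    (F : ℕ → ℕ → ℕ → ℕ) (a₁ b₁ a₂ b₂ x : ℝ) :
    Function.leftLim (fun y => F (p y) (ind a₁ b₁ y) (ind a₂ b₂ y)) x =
      F (Function.leftLim p x) (indL a₁ b₁ x) (indL a₂ b₂ x) := by
  obtain ⟨x₀, hx₀, hp⟩ := exists_leftLim_const hfin x
  obtain ⟨x₁, hx₁, h1⟩ := ind_left a₁ b₁ x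
  obtain ⟨x₂, hx₂, h2⟩ := ind_left a₂ b₂ x
  apply leftLim_eq_const (x₀ := max x₀ (max x₁ x₂)) (by simp [hx₀, hx₁, hx₂])
  rintro y ⟨hy1, hy2⟩
  simp only [max_lt_iff] at hy1
  rw [hp y ⟨hy1.1, hy2⟩, h1 y ⟨hy1.2.1, hy2⟩, h2 y ⟨hy1.2.2, hy2⟩]

lemma jump_iff {m n : ℕ} : |(m : ℤ) - (n : ℤ)| ≤ 1 ↔ (m ≤ n + 1 ∧ n ≤ m + 1) := by
  rw [abs_le]; omega

end Aux
section Core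
open Set Filter Topology

lemma mid3 {u v x : ℝ} (h1 : u < x) (h2 : v < x) : ∃ y, u < y ∧ v < y ∧ y < x :=
  ⟨(max u v + x) / 2, by
    have h3 := max_lt h1 h2
    have h4 := le_max_left u v
    have h5 := le_max_right u v
    exact ⟨by linarith, by linarith, by linarith⟩⟩

lemma leftLim_add_add {p : ℝ → ℕ} (hfin : {x : ℝ | ¬ ContinuousAt p x}.Finite)
    (a₁ b₁ a₂ b₂ x : ℝ) :
    Function.leftLim (fun y => p y + ind a₁ b₁ y + ind a₂ b₂ y) x =
      Function.leftLim p x + indL a₁ b₁ x + indL a₂ b₂ x :=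
  leftLim_combo hfin (fun n i j => n + i + j) a₁ b₁ a₂ b₂ x

lemma leftLim_add {p : ℝ → ℕ} (hfin : {x : ℝ | ¬ ContinuousAt p x}.Finite)
    (a b x : ℝ) :
    Function.leftLim (fun y => p y + ind a b y) x = Function.leftLim p x + indL a b x :=
  leftLim_combo hfin (fun n i _ => n + i) a b a b x

lemma indL_one {a b x : ℝ} (h1 : a < x) (h2 : x ≤ b) : indL a b x = 1 := if_pos ⟨h1, h2⟩

lemma indL_zero {a b x : ℝ} (h : x ≤ a ∨ b < x) : indL a b x = 0 := by
  apply if_neg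
  rintro ⟨h1, h2⟩
  rcases h with h | h <;> linarith

/-- Degenerate case: a shared endpoint makes the double addition impossible. -/
lemma shared_endpoint_false {p : ℝ → ℕ} {a₁ b₁ a₂ b₂ : ℝ}
    (ha : a₂ ≤ a₁) (h₁ : a₁ < b₁) (hb : b₁ ≤ b₂) (heq : a₁ = a₂ ∨ b₁ = b₂)
    (hp : IsRealPyramid p)
    (hs : IsRealPyramid (fun x => p x + ind a₁ b₁ x + ind a₂ b₂ x)) : False := by
  obtain ⟨-, -, hmono1, hmono2, -, hfin, hjump⟩ := hp
  obtain ⟨-, -, hsmono1, hsmono2, -, -, hsjump⟩ := hs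
  rcases heq with heq | heq
  · -- shared left endpoint
    subst heq
    obtain ⟨x₀, hx₀, hc⟩ := exists_leftLim_const hfin a₁
    set c := Function.leftLim p a₁ with hcdef
    rcases le_or_gt a₁ 0 with h0 | h0
    · obtain ⟨y, hy1, -, hy2⟩ := mid3 hx₀ hx₀
      have hyc : p y = c := hc y ⟨hy1, hy2⟩
      have h1 : c ≤ p a₁ := hyc ▸ hmono1 hy2.le h0
      have hj := hsjump a₁
      simp only at hj
      rw [leftLim_add_add hfin] at hj
      rw [ind_one le_rfl h₁, ind_one le_rfl (h₁.trans_le hb),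
        indL_zero (Or.inl le_rfl), indL_zero (Or.inl le_rfl), jump_iff] at hj
      omega
    · obtain ⟨y, hy1, hy2, hy3⟩ := mid3 hx₀ h0
      have hyc : p y = c := hc y ⟨hy1, hy3⟩
      have h1 : (fun x => p x + ind a₁ b₁ x + ind a₁ b₂ x) a₁ ≤
          (fun x => p x + ind a₁ b₁ x + ind a₁ b₂ x) y := hsmono2 hy2.le hy3.le
      simp only [ind_one le_rfl h₁, ind_one le_rfl (h₁.trans_le hb),
        ind_zero (Or.inl hy3), hyc] at h1
      have hj := hjump a₁
      rw [← hcdef, jump_iff] at hj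
      omega
  · -- shared right endpoint
    subst heq
    obtain ⟨x₀, hx₀, hc⟩ := exists_leftLim_const hfin b₁
    set c := Function.leftLim p b₁ with hcdef
    rcases le_or_gt b₁ 0 with h0 | h0
    · obtain ⟨y, hy1, hy2, hy3⟩ := mid3 hx₀ h₁
      have hyc : p y = c := hc y ⟨hy1, hy3⟩
      have h1 : (fun x => p x + ind a₁ b₁ x + ind a₂ b₁ x) y ≤
          (fun x => p x + ind a₁ b₁ x + ind a₂ b₁ x) b₁ := hsmono1 hy3.le h0
      simp only [ind_one hy2.le hy3, ind_one (ha.trans hy2.le) hy3,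
        ind_zero (Or.inr (le_refl b₁)), hyc] at h1
      have hj := hjump b₁
      rw [← hcdef, jump_iff] at hj
      omega
    · obtain ⟨y, hy1, hy2, hy3⟩ := mid3 hx₀ h0
      have hyc : p y = c := hc y ⟨hy1, hy3⟩
      have h1 : p b₁ ≤ c := hyc ▸ hmono2 hy2.le hy3.le
      have hj := hsjump b₁
      simp only at hj
      rw [leftLim_add_add hfin] at hj
      rw [ind_zero (Or.inr (le_refl b₁)), ind_zero (Or.inr (le_refl b₁)),
        indL_one h₁ le_rfl, indL_one (ha.trans_lt h₁) le_rfl, jump_iff] at hj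
      omega

end Core
section Constr
open Set Filter Topology

lemma ind_zero' {a b x : ℝ} (h : ¬(a ≤ x ∧ x < b)) : ind a b x = 0 :=
  Set.indicator_of_notMem (by rwa [Set.mem_Ico]) _

lemma ind_zero_far {a b x : ℝ} (h1 : |a| + 1 ≤ |x|) (h2 : |b| + 1 ≤ |x|) : ind a b x = 0 := by
  rcases le_or_gt 0 x with h0 | h0
  · refine ind_zero (Or.inr ?_)
    rw [abs_of_nonneg h0] at h2
    have := le_abs_self b
    linarith
  · refine ind_zero (Or.inl ?_)
    rw [abs_of_neg h0] at h1
    have := neg_abs_le a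
    linarith

lemma bound_comb {p : ℝ → ℕ} (hM : ∃ M : ℝ, ∀ x : ℝ, M ≤ |x| → p x = 0)
    (F : ℕ → ℕ → ℕ → ℕ) (hF : F 0 0 0 = 0) (a₁ b₁ a₂ b₂ : ℝ) :
    ∃ M : ℝ, ∀ x : ℝ, M ≤ |x| →
      F (p x) (ind a₁ b₁ x) (ind a₂ b₂ x) = 0 := by
  obtain ⟨M, hM⟩ := hM
  refine ⟨max M (max (max (|a₁| + 1) (|b₁| + 1)) (max (|a₂| + 1) (|b₂| + 1))), fun x hx => ?_⟩
  simp only [max_le_iff, and_assoc] at hx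
  obtain ⟨u1, u2, u3, u4, u5⟩ := hx
  rw [hM x u1, ind_zero_far u2 u3, ind_zero_far u4 u5, hF]

lemma rc_comb {p : ℝ → ℕ} (hrc : ∀ x, ContinuousWithinAt p (Set.Ici x) x)
    (F : ℕ → ℕ → ℕ → ℕ) (a₁ b₁ a₂ b₂ : ℝ) (x : ℝ) :
    ContinuousWithinAt (fun y => F (p y) (ind a₁ b₁ y) (ind a₂ b₂ y)) (Set.Ici x) x := by
  rw [cwa_iff]
  filter_upwards [cwa_iff.1 (hrc x), ind_right a₁ b₁ x, ind_right a₂ b₂ x] with y e1 e2 e3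
  rw [e1, e2, e3]

lemma fin_comb {p : ℝ → ℕ} (hfin : {x : ℝ | ¬ ContinuousAt p x}.Finite)
    (F : ℕ → ℕ → ℕ → ℕ) (a₁ b₁ a₂ b₂ : ℝ) :
    {x : ℝ | ¬ ContinuousAt (fun y => F (p y) (ind a₁ b₁ y) (ind a₂ b₂ y)) x}.Finite := by
  apply Set.Finite.subset (hfin.union ((((Set.finite_singleton b₂).insert a₂).insert b₁).insert a₁))
  intro x hx
  simp only [Set.mem_setOf_eq] at hx
  by_contra hcon
  simp only [Set.mem_union, Set.mem_insert_iff, Set.mem_singleton_iff,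
    Set.mem_setOf_eq, not_or, not_not] at hcon
  obtain ⟨hc, h1, h2, h3, h4⟩ := hcon
  apply hx
  rw [ca_iff]
  filter_upwards [ca_iff.1 hc, ind_nhds h1 h2, ind_nhds h3 h4] with y e1 e2 e3
  rw [e1, e2, e3]

/-- C1 : from `p`, `p+1₁`, `p+1₁+1₂` pyramids conclude `p+1₂` pyramid (strict nesting). -/
lemma pyr_add_outer {p : ℝ → ℕ} {a₁ b₁ a₂ b₂ : ℝ}
    (ha : a₂ < a₁) (h₁ : a₁ < b₁) (hb : b₁ < b₂)
    (hp : IsRealPyramid p)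
    (h12 : IsRealPyramid (fun x => p x + ind a₁ b₁ x + ind a₂ b₂ x)) :
    IsRealPyramid (fun x => p x + ind a₂ b₂ x) := by
  obtain ⟨hB, hmax, hm1, hm2, hrc, hfin, hjump⟩ := hp
  obtain ⟨-, hsmax, hsm1, hsm2, -, -, hsjump⟩ := h12
  refine ⟨?_, ?_, ?_, ?_, ?_, ?_, ?_⟩
  · exact bound_comb hB (fun n i _ => n + i) rfl a₂ b₂ a₂ b₂
  · -- max at 0
    intro x
    simp only
    by_cases h0 : a₂ ≤ 0 ∧ 0 < b₂
    · rw [show ind a₂ b₂ 0 = 1 from ind_one h0.1 h0.2]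
      have := hmax x
      have := ind_le_one a₂ b₂ x
      omega
    · rw [show ind a₂ b₂ 0 = 0 from ind_zero' h0]
      by_cases hx : a₂ ≤ x ∧ x < b₂
      · have hs := hsmax x
        simp only at hs
        have h01 : ind a₁ b₁ 0 = 0 := by
          refine ind_zero' ?_
          rintro ⟨u, v⟩
          exact h0 ⟨ha.le.trans u, v.trans hb⟩
        have h02 : ind a₂ b₂ 0 = 0 := ind_zero' h0
        rw [ind_one hx.1 hx.2, h01, h02] at hs
        rw [ind_one hx.1 hx.2]
        omega
      · rw [ind_zero' hx]
        exact hmax x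
  · -- nondecreasing on (-∞, 0]
    intro x y hxy hy0
    simp only
    by_cases hx : a₂ ≤ x ∧ x < b₂ <;> by_cases hy : a₂ ≤ y ∧ y < b₂
    · rw [ind_one hx.1 hx.2, ind_one hy.1 hy.2]
      have := hm1 hxy hy0; omega
    · have hyb : b₂ ≤ y := by
        by_contra hc
        exact hy ⟨hx.1.trans hxy, not_le.1 hc⟩
      have hs := hsm1 hxy hy0
      simp only at hs
      rw [ind_one hx.1 hx.2, ind_zero' hy,
        ind_zero (Or.inr (hb.le.trans hyb))] at hs
      rw [ind_one hx.1 hx.2, ind_zero' hy]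
      omega
    · rw [ind_zero' hx, ind_one hy.1 hy.2]
      have := hm1 hxy hy0; omega
    · rw [ind_zero' hx, ind_zero' hy]
      exact hm1 hxy hy0
  · -- nonincreasing on [0, ∞)
    intro x y hx0 hxy
    simp only
    by_cases hx : a₂ ≤ x ∧ x < b₂ <;> by_cases hy : a₂ ≤ y ∧ y < b₂
    · rw [ind_one hx.1 hx.2, ind_one hy.1 hy.2]
      have := hm2 hx0 hxy; omega
    · rw [ind_one hx.1 hx.2, ind_zero' hy]
      have := hm2 hx0 hxy; omega
    · have hxa : x < a₂ := by
        rcases not_and_or.1 hx with h | h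
        · exact not_le.1 h
        · exact absurd (le_trans (not_lt.1 h) hxy) (not_le.2 hy.2)
      have hs := hsm2 hx0 hxy
      simp only at hs
      rw [ind_one hy.1 hy.2, ind_zero (Or.inl hxa),
        ind_zero (Or.inl (hxa.trans ha))] at hs
      rw [ind_one hy.1 hy.2, ind_zero (Or.inl hxa)]
      omega
    · rw [ind_zero' hx, ind_zero' hy]
      exact hm2 hx0 hxy
  · exact fun x => rc_comb hrc (fun n i _ => n + i) a₂ b₂ a₂ b₂ x
  · exact fin_comb hfin (fun n i _ => n + i) a₂ b₂ a₂ b₂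
  · -- jumps
    intro x
    simp only
    rw [leftLim_add hfin]
    rcases lt_trichotomy x a₂ with h | rfl | h
    · rw [ind_zero (Or.inl h), indL_zero (Or.inl h.le)]
      have := hjump x
      rw [jump_iff] at *
      omega
    · have hj := hsjump x
      simp only at hj
      rw [leftLim_add_add hfin] at hj
      rw [ind_zero (Or.inl ha), indL_zero (Or.inl ha.le),
        ind_one le_rfl (ha.trans (h₁.trans hb)), indL_zero (Or.inl le_rfl)] at hj
      rw [ind_one le_rfl (ha.trans (h₁.trans hb)), indL_zero (Or.inl le_rfl)]
      rw [jump_iff] at *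
      omega
    rcases lt_trichotomy x b₂ with h' | rfl | h'
    · rw [ind_one h.le h', indL_one h h'.le]
      have := hjump x
      rw [jump_iff] at *
      omega
    · have hj := hsjump x
      simp only at hj
      rw [leftLim_add_add hfin] at hj
      rw [ind_zero (Or.inr hb.le), indL_zero (Or.inr hb),
        ind_zero (Or.inr le_rfl), indL_one h le_rfl] at hj
      rw [ind_zero (Or.inr le_rfl), indL_one h le_rfl]
      rw [jump_iff] at *
      omega
    · rw [ind_zero (Or.inr h'.le), indL_zero (Or.inr h')]
      have := hjump x
      rw [jump_iff] at *
      omega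

/-- C2 : from `p`, `p+1₂`, `p+1₂+1₁` pyramids conclude `p+1₁` pyramid (strict nesting). -/
lemma pyr_add_inner {p : ℝ → ℕ} {a₁ b₁ a₂ b₂ : ℝ}
    (ha : a₂ < a₁) (h₁ : a₁ < b₁) (hb : b₁ < b₂)
    (hp : IsRealPyramid p)
    (h21 : IsRealPyramid (fun x => p x + ind a₂ b₂ x + ind a₁ b₁ x)) :
    IsRealPyramid (fun x => p x + ind a₁ b₁ x) := by
  obtain ⟨hB, hmax, hm1, hm2, hrc, hfin, hjump⟩ := hp
  obtain ⟨-, hsmax, hsm1, hsm2, -, -, hsjump⟩ := h21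
  have hsub : ∀ x : ℝ, a₁ ≤ x → x < b₁ → ind a₂ b₂ x = 1 := fun x u v =>
    ind_one (ha.le.trans u) (v.trans hb)
  refine ⟨?_, ?_, ?_, ?_, ?_, ?_, ?_⟩
  · exact bound_comb hB (fun n i _ => n + i) rfl a₁ b₁ a₁ b₁
  · -- max at 0
    intro x
    simp only
    by_cases h0 : a₁ ≤ 0 ∧ 0 < b₁
    · rw [show ind a₁ b₁ 0 = 1 from ind_one h0.1 h0.2]
      have := hmax x
      have := ind_le_one a₁ b₁ x
      omega
    · rw [show ind a₁ b₁ 0 = 0 from ind_zero' h0]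
      by_cases hx : a₁ ≤ x ∧ x < b₁
      · have hs := hsmax x
        simp only at hs
        have h01 : ind a₁ b₁ 0 = 0 := ind_zero' h0
        have h02 := ind_le_one a₂ b₂ 0
        rw [ind_one hx.1 hx.2, hsub x hx.1 hx.2, h01] at hs
        rw [ind_one hx.1 hx.2]
        omega
      · rw [ind_zero' hx]
        exact hmax x
  · -- nondecreasing on (-∞, 0]
    intro x y hxy hy0
    simp only
    by_cases hx : a₁ ≤ x ∧ x < b₁ <;> by_cases hy : a₁ ≤ y ∧ y < b₁
    · rw [ind_one hx.1 hx.2, ind_one hy.1 hy.2]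
      have := hm1 hxy hy0; omega
    · have hyb : b₁ ≤ y := by
        by_contra hc
        exact hy ⟨hx.1.trans hxy, not_le.1 hc⟩
      have hs := hsm1 hxy hy0
      simp only at hs
      have h2y := ind_le_one a₂ b₂ y
      rw [ind_one hx.1 hx.2, ind_zero' hy, hsub x hx.1 hx.2] at hs
      rw [ind_one hx.1 hx.2, ind_zero' hy]
      omega
    · rw [ind_zero' hx, ind_one hy.1 hy.2]
      have := hm1 hxy hy0; omega
    · rw [ind_zero' hx, ind_zero' hy]
      exact hm1 hxy hy0
  · -- nonincreasing on [0, ∞)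
    intro x y hx0 hxy
    simp only
    by_cases hx : a₁ ≤ x ∧ x < b₁ <;> by_cases hy : a₁ ≤ y ∧ y < b₁
    · rw [ind_one hx.1 hx.2, ind_one hy.1 hy.2]
      have := hm2 hx0 hxy; omega
    · rw [ind_one hx.1 hx.2, ind_zero' hy]
      have := hm2 hx0 hxy; omega
    · have hxa : x < a₁ := by
        rcases not_and_or.1 hx with h | h
        · exact not_le.1 h
        · exact absurd (le_trans (not_lt.1 h) hxy) (not_le.2 hy.2)
      have hs := hsm2 hx0 hxy
      simp only at hs
      have h2x := ind_le_one a₂ b₂ x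
      rw [ind_one hy.1 hy.2, ind_zero (Or.inl hxa), hsub y hy.1 hy.2] at hs
      rw [ind_one hy.1 hy.2, ind_zero (Or.inl hxa)]
      omega
    · rw [ind_zero' hx, ind_zero' hy]
      exact hm2 hx0 hxy
  · exact fun x => rc_comb hrc (fun n i _ => n + i) a₁ b₁ a₁ b₁ x
  · exact fin_comb hfin (fun n i _ => n + i) a₁ b₁ a₁ b₁
  · -- jumps
    intro x
    simp only
    rw [leftLim_add hfin]
    rcases lt_trichotomy x a₁ with h | rfl | h
    · rw [ind_zero (Or.inl h), indL_zero (Or.inl h.le)]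
      have := hjump x
      rw [jump_iff] at *
      omega
    · have hj := hsjump x
      simp only at hj
      rw [leftLim_add_add hfin] at hj
      rw [ind_one ha.le (h₁.trans hb), indL_one ha (h₁.trans hb).le,
        ind_one le_rfl h₁, indL_zero (Or.inl le_rfl)] at hj
      rw [ind_one le_rfl h₁, indL_zero (Or.inl le_rfl)]
      rw [jump_iff] at *
      omega
    rcases lt_trichotomy x b₁ with h' | rfl | h'
    · rw [ind_one h.le h', indL_one h h'.le]
      have := hjump x
      rw [jump_iff] at *
      omega
    · have hj := hsjump x
      simp only at hj
      rw [leftLim_add_add hfin] at hj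
      rw [ind_one (ha.le.trans h₁.le) hb, indL_one (ha.trans h₁) hb.le,
        ind_zero (Or.inr le_rfl), indL_one h le_rfl] at hj
      rw [ind_zero (Or.inr le_rfl), indL_one h le_rfl]
      rw [jump_iff] at *
      omega
    · rw [ind_zero (Or.inr h'.le), indL_zero (Or.inr h')]
      have := hjump x
      rw [jump_iff] at *
      omega

end Constr
section Equiv
open Set Filter Topology

variable {p : ℝ → ℕ} {a₁ b₁ a₂ b₂ : ℝ}

private lemma ind_facts (ha : a₂ ≤ a₁) (h₁ : a₁ < b₁) (hb : b₁ ≤ b₂) (x : ℝ) :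
    (ind a₁ b₁ x = 1 → ind a₂ b₂ x = 1) ∧ ind a₁ b₁ x ≤ 1 ∧ ind a₂ b₂ x ≤ 1 := by
  refine ⟨fun h => ?_, ind_le_one a₁ b₁ x, ind_le_one a₂ b₂ x⟩
  by_cases hx : a₁ ≤ x ∧ x < b₁
  · exact ind_one (ha.trans hx.1) (hx.2.trans_le hb)
  · rw [ind_zero' hx] at h; exact absurd h (by omega)

private lemma ind_one_of (h1 : a₁ ≤ x) (h2 : x < b₁) : ind a₁ b₁ x = 1 := ind_one h1 h2

/-- Strict-nesting commutation for removals. -/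
lemma removable_comm (ha : a₂ < a₁) (h₁ : a₁ < b₁) (hb : b₁ < b₂) (hp : IsRealPyramid p) :
    (Removable p a₂ b₂ ∧ Removable (fun x => p x - ind a₂ b₂ x) a₁ b₁) ↔
    (Removable p a₁ b₁ ∧ Removable (fun x => p x - ind a₁ b₁ x) a₂ b₂) := by
  constructor
  · rintro ⟨⟨hge2, hq2⟩, ⟨hge21, hr⟩⟩
    simp only [Set.mem_Ico] at hge2 hge21
    have hJ1 : ∀ x : ℝ, a₁ ≤ x → x < b₁ → 2 ≤ p x := by
      intro x u v
      have h1 := hge21 x ⟨u, v⟩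
      have h2 := ind_one (ha.le.trans u) (v.trans hb)
      omega
    have hJ2 : ∀ x : ℝ, a₂ ≤ x → x < b₂ → 1 ≤ p x := fun x u v => hge2 x ⟨u, v⟩
    have key : ∀ x : ℝ, (ind a₁ b₁ x = 1 → 2 ≤ p x) ∧ (ind a₂ b₂ x = 1 → 1 ≤ p x) ∧
        (ind a₁ b₁ x = 1 → ind a₂ b₂ x = 1) ∧ ind a₁ b₁ x ≤ 1 ∧ ind a₂ b₂ x ≤ 1 := by
      intro x
      have hf := ind_facts ha.le h₁ hb.le x
      refine ⟨fun h => ?_, fun h => ?_, hf.1, hf.2.1, hf.2.2⟩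
      · by_cases hx : a₁ ≤ x ∧ x < b₁
        · exact hJ1 x hx.1 hx.2
        · rw [ind_zero' hx] at h; exact absurd h (by omega)
      · by_cases hx : a₂ ≤ x ∧ x < b₂
        · exact hJ2 x hx.1 hx.2
        · rw [ind_zero' hx] at h; exact absurd h (by omega)
    have e2 : (fun x => (p x - ind a₂ b₂ x - ind a₁ b₁ x) + ind a₁ b₁ x + ind a₂ b₂ x) = p := by
      funext x; have := key x; omega
    have e3 : (fun x => (p x - ind a₂ b₂ x - ind a₁ b₁ x) + ind a₂ b₂ x) =
        (fun x => p x - ind a₁ b₁ x) := by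
      funext x; have := key x; omega
    have e4 : (fun x => (p x - ind a₁ b₁ x) - ind a₂ b₂ x) =
        (fun x => (p x - ind a₂ b₂ x) - ind a₁ b₁ x) := by
      funext x; omega
    have hq1 : IsRealPyramid (fun x => p x - ind a₁ b₁ x) := by
      rw [← e3]
      apply pyr_add_outer ha h₁ hb hr
      rw [e2]; exact hp
    refine ⟨⟨fun x hx => le_trans (by omega) (hJ1 x hx.1 hx.2), hq1⟩,
      ⟨fun x hx => ?_, by rw [e4]; exact hr⟩⟩
    simp only
    have := key x
    have := hJ2 x hx.1 hx.2
    omega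
  · rintro ⟨⟨hge1, hq1⟩, ⟨hge12, hr'⟩⟩
    simp only [Set.mem_Ico] at hge1 hge12
    have hJ1 : ∀ x : ℝ, a₁ ≤ x → x < b₁ → 2 ≤ p x := by
      intro x u v
      have h1 := hge12 x ⟨ha.le.trans u, v.trans hb⟩
      have h2 := ind_one u v
      omega
    have hJ2 : ∀ x : ℝ, a₂ ≤ x → x < b₂ → 1 ≤ p x := by
      intro x u v
      have h1 := hge12 x ⟨u, v⟩
      omega
    have key : ∀ x : ℝ, (ind a₁ b₁ x = 1 → 2 ≤ p x) ∧ (ind a₂ b₂ x = 1 → 1 ≤ p x) ∧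
        (ind a₁ b₁ x = 1 → ind a₂ b₂ x = 1) ∧ ind a₁ b₁ x ≤ 1 ∧ ind a₂ b₂ x ≤ 1 := by
      intro x
      have hf := ind_facts ha.le h₁ hb.le x
      refine ⟨fun h => ?_, fun h => ?_, hf.1, hf.2.1, hf.2.2⟩
      · by_cases hx : a₁ ≤ x ∧ x < b₁
        · exact hJ1 x hx.1 hx.2
        · rw [ind_zero' hx] at h; exact absurd h (by omega)
      · by_cases hx : a₂ ≤ x ∧ x < b₂
        · exact hJ2 x hx.1 hx.2
        · rw [ind_zero' hx] at h; exact absurd h (by omega)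
    have e1 : (fun x => (p x - ind a₁ b₁ x - ind a₂ b₂ x) + ind a₁ b₁ x) =
        (fun x => p x - ind a₂ b₂ x) := by
      funext x; have := key x; omega
    have e5 : (fun x => (p x - ind a₁ b₁ x - ind a₂ b₂ x) + ind a₂ b₂ x + ind a₁ b₁ x) = p := by
      funext x; have := key x; omega
    have e4 : (fun x => (p x - ind a₂ b₂ x) - ind a₁ b₁ x) =
        (fun x => (p x - ind a₁ b₁ x) - ind a₂ b₂ x) := by
      funext x; omega
    have hq2 : IsRealPyramid (fun x => p x - ind a₂ b₂ x) := by
      rw [← e1]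
      apply pyr_add_inner ha h₁ hb hr'
      rw [e5]; exact hp
    refine ⟨⟨fun x hx => hJ2 x hx.1 hx.2, hq2⟩, ⟨fun x hx => ?_, by rw [e4]; exact hr'⟩⟩
    simp only
    have := key x
    have h2x := ind_one (ha.le.trans hx.1) (hx.2.trans hb)
    have := hJ1 x hx.1 hx.2
    omega

/-- Strict-nesting commutation for additions. -/
lemma addable_comm (ha : a₂ < a₁) (h₁ : a₁ < b₁) (hb : b₁ < b₂) (hp : IsRealPyramid p) :
    (Addable p a₂ b₂ ∧ Addable (fun x => p x + ind a₂ b₂ x) a₁ b₁) ↔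
    (Addable p a₁ b₁ ∧ Addable (fun x => p x + ind a₁ b₁ x) a₂ b₂) := by
  have ecomm : (fun x => p x + ind a₂ b₂ x + ind a₁ b₁ x) =
      (fun x => p x + ind a₁ b₁ x + ind a₂ b₂ x) := by
    funext x; omega
  constructor
  · rintro ⟨h2, h21⟩
    have h21' : IsRealPyramid (fun x => p x + ind a₂ b₂ x + ind a₁ b₁ x) := h21
    have h1 : IsRealPyramid (fun x => p x + ind a₁ b₁ x) :=
      pyr_add_inner ha h₁ hb hp h21'
    refine ⟨h1, ?_⟩
    show IsRealPyramid _
    have h' : IsRealPyramid (fun x => p x + ind a₁ b₁ x + ind a₂ b₂ x) := by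
      rw [← ecomm]; exact h21'
    exact h'
  · rintro ⟨h1, h12⟩
    have h12' : IsRealPyramid (fun x => p x + ind a₁ b₁ x + ind a₂ b₂ x) := h12
    have h2 : IsRealPyramid (fun x => p x + ind a₂ b₂ x) :=
      pyr_add_outer ha h₁ hb hp h12'
    refine ⟨h2, ?_⟩
    show IsRealPyramid _
    have h' : IsRealPyramid (fun x => p x + ind a₂ b₂ x + ind a₁ b₁ x) := by
      rw [ecomm]; exact h12'
    exact h'

/-- Degenerate case: removals in sequence are impossible with a shared endpoint. -/
lemma not_removable_seq (ha : a₂ ≤ a₁) (h₁ : a₁ < b₁) (hb : b₁ ≤ b₂)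
    (heq : a₁ = a₂ ∨ b₁ = b₂) (hp : IsRealPyramid p) (hR2 : Removable p a₂ b₂) :
    ¬ Removable (fun x => p x - ind a₂ b₂ x) a₁ b₁ := by
  rintro ⟨hge21, hr⟩
  simp only [Set.mem_Ico] at hge21
  have hJ1 : ∀ x : ℝ, a₁ ≤ x → x < b₁ → 2 ≤ p x := by
    intro x u v
    have h1 := hge21 x ⟨u, v⟩
    have h2 := ind_one (ha.trans u) (v.trans_le hb)
    omega
  have key : ∀ x : ℝ, (ind a₁ b₁ x = 1 → 2 ≤ p x) ∧ (ind a₂ b₂ x = 1 → 1 ≤ p x) ∧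
      (ind a₁ b₁ x = 1 → ind a₂ b₂ x = 1) ∧ ind a₁ b₁ x ≤ 1 ∧ ind a₂ b₂ x ≤ 1 := by
    intro x
    have hf := ind_facts ha h₁ hb x
    refine ⟨fun h => ?_, fun h => ?_, hf.1, hf.2.1, hf.2.2⟩
    · by_cases hx : a₁ ≤ x ∧ x < b₁
      · exact hJ1 x hx.1 hx.2
      · rw [ind_zero' hx] at h; exact absurd h (by omega)
    · by_cases hx : a₂ ≤ x ∧ x < b₂
      · exact hR2.1 x hx
      · rw [ind_zero' hx] at h; exact absurd h (by omega)
  have e : (fun x => (p x - ind a₂ b₂ x - ind a₁ b₁ x) + ind a₁ b₁ x + ind a₂ b₂ x) = p := by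
    funext x; have := key x; omega
  exact shared_endpoint_false ha h₁ hb heq hr (by rw [e]; exact hp)

lemma not_removable_seq' (ha : a₂ ≤ a₁) (h₁ : a₁ < b₁) (hb : b₁ ≤ b₂)
    (heq : a₁ = a₂ ∨ b₁ = b₂) (hp : IsRealPyramid p) (hR1 : Removable p a₁ b₁) :
    ¬ Removable (fun x => p x - ind a₁ b₁ x) a₂ b₂ := by
  rintro ⟨hge12, hr⟩
  simp only [Set.mem_Ico] at hge12
  have hJ1 : ∀ x : ℝ, a₁ ≤ x → x < b₁ → 2 ≤ p x := by
    intro x u v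
    have h1 := hge12 x ⟨ha.trans u, v.trans_le hb⟩
    have h2 := ind_one u v
    omega
  have hJ2 : ∀ x : ℝ, a₂ ≤ x → x < b₂ → 1 ≤ p x := by
    intro x u v
    have h1 := hge12 x ⟨u, v⟩
    omega
  have key : ∀ x : ℝ, (ind a₁ b₁ x = 1 → 2 ≤ p x) ∧ (ind a₂ b₂ x = 1 → 1 ≤ p x) ∧
      (ind a₁ b₁ x = 1 → ind a₂ b₂ x = 1) ∧ ind a₁ b₁ x ≤ 1 ∧ ind a₂ b₂ x ≤ 1 := by
    intro x
    have hf := ind_facts ha h₁ hb x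
    refine ⟨fun h => ?_, fun h => ?_, hf.1, hf.2.1, hf.2.2⟩
    · by_cases hx : a₁ ≤ x ∧ x < b₁
      · exact hJ1 x hx.1 hx.2
      · rw [ind_zero' hx] at h; exact absurd h (by omega)
    · by_cases hx : a₂ ≤ x ∧ x < b₂
      · exact hJ2 x hx.1 hx.2
      · rw [ind_zero' hx] at h; exact absurd h (by omega)
  have hr' : IsRealPyramid (fun x => (p x - ind a₂ b₂ x - ind a₁ b₁ x)) := by
    have e4 : (fun x => (p x - ind a₂ b₂ x) - ind a₁ b₁ x) =
        (fun x => (p x - ind a₁ b₁ x) - ind a₂ b₂ x) := by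
      funext x; omega
    rw [e4]; exact hr
  have e : (fun x => (p x - ind a₂ b₂ x - ind a₁ b₁ x) + ind a₁ b₁ x + ind a₂ b₂ x) = p := by
    funext x; have := key x; omega
  exact shared_endpoint_false ha h₁ hb heq hr' (by rw [e]; exact hp)

/-- Degenerate case: additions in sequence are impossible with a shared endpoint. -/
lemma not_addable_seq (ha : a₂ ≤ a₁) (h₁ : a₁ < b₁) (hb : b₁ ≤ b₂)
    (heq : a₁ = a₂ ∨ b₁ = b₂) (hp : IsRealPyramid p) :
    ¬ Addable (fun x => p x + ind a₂ b₂ x) a₁ b₁ := by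
  intro hs
  have hs' : IsRealPyramid (fun x => p x + ind a₁ b₁ x + ind a₂ b₂ x) := by
    have e : (fun x => p x + ind a₂ b₂ x + ind a₁ b₁ x) =
        (fun x => p x + ind a₁ b₁ x + ind a₂ b₂ x) := by funext x; omega
    rw [← e]; exact hs
  exact shared_endpoint_false ha h₁ hb heq hp hs'

lemma not_addable_seq' (ha : a₂ ≤ a₁) (h₁ : a₁ < b₁) (hb : b₁ ≤ b₂)
    (heq : a₁ = a₂ ∨ b₁ = b₂) (hp : IsRealPyramid p) :
    ¬ Addable (fun x => p x + ind a₁ b₁ x) a₂ b₂ := by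
  intro hs
  exact shared_endpoint_false ha h₁ hb heq hp hs

end Equiv
section PairZ
open Set Filter Topology

lemma indZ_cast (a b x : ℝ) : indZ a b x = (ind a b x : ℤ) := by
  unfold indZ ind
  by_cases h : x ∈ Set.Ico a b
  · rw [Set.indicator_of_mem h, Set.indicator_of_mem h, Nat.cast_one]
  · rw [Set.indicator_of_notMem h, Set.indicator_of_notMem h, Nat.cast_zero]

lemma leftLim_eq_constZ {f : ℝ → ℤ} {x₀ x : ℝ} (h : x₀ < x) {c : ℤ}
    (hc : ∀ y ∈ Set.Ioo x₀ x, f y = c) : Function.leftLim f x = c := by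
  apply leftLim_eq_of_tendsto
  rw [nhds_discrete ℤ, Filter.tendsto_pure]
  filter_upwards [Ioo_mem_nhdsLT_of_mem ⟨h, le_refl x⟩] with y hy using hc y hy

lemma leftLim_indZ (a b x : ℝ) :
    Function.leftLim (indZ a b) x = (indL a b x : ℤ) := by
  obtain ⟨x₀, hx₀, hc⟩ := ind_left a b x
  apply leftLim_eq_constZ hx₀
  intro y hy
  rw [indZ_cast, hc y hy]

lemma pairZ_inner_outer {a₁ b₁ a₂ b₂ : ℝ} (ha : a₂ < a₁) (h₁ : a₁ < b₁) (hb : b₁ < b₂) :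
    pairZ (indZ a₁ b₁) (indZ a₂ b₂) = 0 := by
  unfold pairZ
  apply finsum_eq_zero_of_forall_eq_zero
  intro x
  rw [leftLim_indZ, leftLim_indZ, indZ_cast]
  rcases lt_trichotomy x a₂ with h | rfl | h
  · rw [indL_zero (a := a₂) (Or.inl h.le), ind_zero (Or.inl h)]
    ring
  · rw [indL_zero (a := a₁) (Or.inl ha.le)]
    ring
  rcases lt_trichotomy x b₂ with h' | rfl | h'
  · rw [indL_one h h'.le, ind_one h.le h']
    ring
  · rw [indL_zero (a := a₁) (Or.inr hb)]
    ring
  · rw [indL_zero (a := a₂) (Or.inr h'), ind_zero (Or.inr h'.le)]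
    ring

lemma pairZ_outer_inner {a₁ b₁ a₂ b₂ : ℝ} (ha : a₂ < a₁) (h₁ : a₁ < b₁) (hb : b₁ < b₂) :
    pairZ (indZ a₂ b₂) (indZ a₁ b₁) = 0 := by
  unfold pairZ
  have hsupp : (Function.support fun x =>
      Function.leftLim (indZ a₂ b₂) x * (Function.leftLim (indZ a₁ b₁) x - indZ a₁ b₁ x)) ⊆
      (({a₁, b₁} : Finset ℝ) : Set ℝ) := by
    intro x hx
    simp only [Function.mem_support] at hx
    simp only [Finset.coe_insert, Finset.coe_singleton, Set.mem_insert_iff,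
      Set.mem_singleton_iff]
    by_contra hcon
    push_neg at hcon
    apply hx
    rw [leftLim_indZ, leftLim_indZ, indZ_cast]
    rcases lt_trichotomy x a₁ with h | h | h
    · rw [indL_zero (a := a₁) (Or.inl h.le), ind_zero (Or.inl h)]
      ring
    · exact absurd h hcon.1
    rcases lt_trichotomy x b₁ with h' | h' | h'
    · rw [indL_one h h'.le, ind_one h.le h']
      ring
    · exact absurd h' hcon.2
    · rw [indL_zero (a := a₁) (Or.inr h'), ind_zero (Or.inr h'.le)]
      ring
  rw [finsum_eq_sum_of_support_subset _ hsupp]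
  rw [Finset.sum_pair h₁.ne]
  rw [leftLim_indZ, leftLim_indZ, leftLim_indZ, leftLim_indZ, indZ_cast, indZ_cast]
  rw [indL_one ha (h₁.trans hb).le, indL_zero (a := a₁) (Or.inl le_rfl),
    ind_one le_rfl h₁, indL_one (ha.trans h₁) hb.le, indL_one h₁ le_rfl,
    ind_zero (a := a₁) (Or.inr le_rfl)]
  ring

end PairZ
section Ops
open Set Filter Topology

lemma nvK_ne : (-vK) ≠ 0 := by
  unfold vK tK
  exact neg_ne_zero.2 (pow_ne_zero 2 RatFunc.X_ne_zero)

lemma tv_coef {e1 e2 e3 e4 : ℤ} (h : e1 + e2 = e3 + e4) (s : K) :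
    (s * (-vK) ^ e1) * (s * (-vK) ^ e2) = (s * (-vK) ^ e3) * (s * (-vK) ^ e4) := by
  rw [mul_mul_mul_comm, ← zpow_add₀ nvK_ne, h, zpow_add₀ nvK_ne, ← mul_mul_mul_comm]

lemma Eop_single_pos {a b : ℝ} {p : Pyr} (h : Removable p.1 a b) (k : K) :
    Eop a b (Finsupp.single p k) =
      Finsupp.single (⟨fun x => p.1 x - ind a b x, h.2⟩ : Pyr)
        (k * (-tK * (-vK) ^ ((p.1 b : ℤ) - (p.1 a : ℤ)))) := by
  unfold Eop
  rw [Finsupp.lsum_single, LinearMap.toSpanSingleton_apply]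
  unfold Evec
  rw [dif_pos h]
  exact Finsupp.smul_single' _ _ _

lemma Eop_single_neg {a b : ℝ} {p : Pyr} (h : ¬ Removable p.1 a b) (k : K) :
    Eop a b (Finsupp.single p k) = 0 := by
  unfold Eop
  rw [Finsupp.lsum_single, LinearMap.toSpanSingleton_apply]
  unfold Evec
  rw [dif_neg h, smul_zero]

lemma Fop_single_pos {a b : ℝ} {p : Pyr} (h : Addable p.1 a b) (k : K) :
    Fop a b (Finsupp.single p k) =
      Finsupp.single (⟨fun x => p.1 x + ind a b x, h⟩ : Pyr)
        (k * (tK * (-vK) ^ ((p.1 a : ℤ) - (p.1 b : ℤ)))) := by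
  unfold Fop
  rw [Finsupp.lsum_single, LinearMap.toSpanSingleton_apply]
  unfold Fvec
  rw [dif_pos h]
  exact Finsupp.smul_single' _ _ _

lemma Fop_single_neg {a b : ℝ} {p : Pyr} (h : ¬ Addable p.1 a b) (k : K) :
    Fop a b (Finsupp.single p k) = 0 := by
  unfold Fop
  rw [Finsupp.lsum_single, LinearMap.toSpanSingleton_apply]
  unfold Fvec
  rw [dif_neg h, smul_zero]

lemma Ecomp_comm {a₁ b₁ a₂ b₂ : ℝ} (ha : a₂ < a₁) (h₁ : a₁ < b₁) (hb : b₁ < b₂) :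
    Eop a₁ b₁ ∘ₗ Eop a₂ b₂ = Eop a₂ b₂ ∘ₗ Eop a₁ b₁ := by
  apply Finsupp.lhom_ext
  intro p k
  rw [LinearMap.comp_apply, LinearMap.comp_apply]
  by_cases h2 : Removable p.1 a₂ b₂ <;> by_cases h1 : Removable p.1 a₁ b₁
  · -- both removable
    rw [Eop_single_pos h2, Eop_single_pos h1]
    by_cases h21 : Removable (fun x => p.1 x - ind a₂ b₂ x) a₁ b₁
    · have h12 : Removable (fun x => p.1 x - ind a₁ b₁ x) a₂ b₂ :=
        ((removable_comm ha h₁ hb p.2).1 ⟨h2, h21⟩).2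
      erw [Eop_single_pos (p := ⟨fun x => p.1 x - ind a₂ b₂ x, h2.2⟩) h21, Eop_single_pos (p := ⟨fun x => p.1 x - ind a₁ b₁ x, h1.2⟩) h12]
      have hq : (⟨fun x => (fun x => p.1 x - ind a₂ b₂ x) x - ind a₁ b₁ x, h21.2⟩ : Pyr) =
          (⟨fun x => (fun x => p.1 x - ind a₁ b₁ x) x - ind a₂ b₂ x, h12.2⟩ : Pyr) := by
        apply Subtype.ext
        funext x
        simp only
        omega
      rw [hq]
      have hpb₁ : 1 ≤ p.1 b₁ := h2.1 b₁ (Set.mem_Ico.2 ⟨(ha.trans h₁).le, hb⟩)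
      have hpa₁ : 1 ≤ p.1 a₁ := h2.1 a₁ (Set.mem_Ico.2 ⟨ha.le, h₁.trans hb⟩)
      have i1 : ind a₂ b₂ b₁ = 1 := ind_one (ha.trans h₁).le hb
      have i2 : ind a₂ b₂ a₁ = 1 := ind_one ha.le (h₁.trans hb)
      have i3 : ind a₁ b₁ b₂ = 0 := ind_zero (Or.inr hb.le)
      have i4 : ind a₁ b₁ a₂ = 0 := ind_zero (Or.inl ha)
      have hexp : ((p.1 b₂ : ℤ) - (p.1 a₂ : ℤ)) +
          ((((fun x => p.1 x - ind a₂ b₂ x) b₁ : ℕ) : ℤ) -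
            (((fun x => p.1 x - ind a₂ b₂ x) a₁ : ℕ) : ℤ)) =
          ((p.1 b₁ : ℤ) - (p.1 a₁ : ℤ)) +
          ((((fun x => p.1 x - ind a₁ b₁ x) b₂ : ℕ) : ℤ) -
            (((fun x => p.1 x - ind a₁ b₁ x) a₂ : ℕ) : ℤ)) := by
        simp only
        rw [i1, i2, i3, i4]
        omega
      rw [mul_assoc k, mul_assoc k]
      exact congrArg (Finsupp.single _) (congrArg (fun z => k * z) (tv_coef hexp (-tK)))
    · have h12 : ¬ Removable (fun x => p.1 x - ind a₁ b₁ x) a₂ b₂ := fun hc =>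
        h21 ((removable_comm ha h₁ hb p.2).2 ⟨h1, hc⟩).2
      erw [Eop_single_neg h21, Eop_single_neg h12]
  · -- only J₂ removable
    have h21 : ¬ Removable (fun x => p.1 x - ind a₂ b₂ x) a₁ b₁ := fun hc =>
      h1 ((removable_comm ha h₁ hb p.2).1 ⟨h2, hc⟩).1
    rw [Eop_single_pos h2]
    erw [Eop_single_neg (p := ⟨fun x => p.1 x - ind a₂ b₂ x, h2.2⟩) h21]
    rw [Eop_single_neg h1, map_zero]
  · -- only J₁ removable
    have h12 : ¬ Removable (fun x => p.1 x - ind a₁ b₁ x) a₂ b₂ := fun hc =>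
      h2 ((removable_comm ha h₁ hb p.2).2 ⟨h1, hc⟩).1
    rw [Eop_single_neg h2, map_zero, Eop_single_pos h1]
    erw [Eop_single_neg (p := ⟨fun x => p.1 x - ind a₁ b₁ x, h1.2⟩) h12]
  · rw [Eop_single_neg h2, map_zero, Eop_single_neg h1, map_zero]

lemma Fcomp_comm {a₁ b₁ a₂ b₂ : ℝ} (ha : a₂ < a₁) (h₁ : a₁ < b₁) (hb : b₁ < b₂) :
    Fop a₁ b₁ ∘ₗ Fop a₂ b₂ = Fop a₂ b₂ ∘ₗ Fop a₁ b₁ := by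
  apply Finsupp.lhom_ext
  intro p k
  rw [LinearMap.comp_apply, LinearMap.comp_apply]
  by_cases h2 : Addable p.1 a₂ b₂ <;> by_cases h1 : Addable p.1 a₁ b₁
  · rw [Fop_single_pos h2, Fop_single_pos h1]
    by_cases h21 : Addable (fun x => p.1 x + ind a₂ b₂ x) a₁ b₁
    · have h12 : Addable (fun x => p.1 x + ind a₁ b₁ x) a₂ b₂ :=
        ((addable_comm ha h₁ hb p.2).1 ⟨h2, h21⟩).2
      erw [Fop_single_pos (p := ⟨fun x => p.1 x + ind a₂ b₂ x, h2⟩) h21, Fop_single_pos (p := ⟨fun x => p.1 x + ind a₁ b₁ x, h1⟩) h12]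
      have hq : (⟨fun x => (fun x => p.1 x + ind a₂ b₂ x) x + ind a₁ b₁ x, h21⟩ : Pyr) =
          (⟨fun x => (fun x => p.1 x + ind a₁ b₁ x) x + ind a₂ b₂ x, h12⟩ : Pyr) := by
        apply Subtype.ext
        funext x
        simp only
        omega
      rw [hq]
      have i1 : ind a₂ b₂ b₁ = 1 := ind_one (ha.trans h₁).le hb
      have i2 : ind a₂ b₂ a₁ = 1 := ind_one ha.le (h₁.trans hb)
      have i3 : ind a₁ b₁ b₂ = 0 := ind_zero (Or.inr hb.le)
      have i4 : ind a₁ b₁ a₂ = 0 := ind_zero (Or.inl ha)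
      have hexp : ((p.1 a₂ : ℤ) - (p.1 b₂ : ℤ)) +
          ((((fun x => p.1 x + ind a₂ b₂ x) a₁ : ℕ) : ℤ) -
            (((fun x => p.1 x + ind a₂ b₂ x) b₁ : ℕ) : ℤ)) =
          ((p.1 a₁ : ℤ) - (p.1 b₁ : ℤ)) +
          ((((fun x => p.1 x + ind a₁ b₁ x) a₂ : ℕ) : ℤ) -
            (((fun x => p.1 x + ind a₁ b₁ x) b₂ : ℕ) : ℤ)) := by
        simp only
        rw [i1, i2, i3, i4]
        omega
      rw [mul_assoc k, mul_assoc k]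
      exact congrArg (Finsupp.single _) (congrArg (fun z => k * z) (tv_coef hexp tK))
    · have h12 : ¬ Addable (fun x => p.1 x + ind a₁ b₁ x) a₂ b₂ := fun hc =>
        h21 ((addable_comm ha h₁ hb p.2).2 ⟨h1, hc⟩).2
      erw [Fop_single_neg h21, Fop_single_neg h12]
  · have h21 : ¬ Addable (fun x => p.1 x + ind a₂ b₂ x) a₁ b₁ := fun hc =>
      h1 ((addable_comm ha h₁ hb p.2).1 ⟨h2, hc⟩).1
    rw [Fop_single_pos h2]
    erw [Fop_single_neg (p := ⟨fun x => p.1 x + ind a₂ b₂ x, h2⟩) h21]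
    rw [Fop_single_neg h1, map_zero]
  · have h12 : ¬ Addable (fun x => p.1 x + ind a₁ b₁ x) a₂ b₂ := fun hc =>
      h2 ((addable_comm ha h₁ hb p.2).2 ⟨h1, hc⟩).1
    rw [Fop_single_neg h2, map_zero, Fop_single_pos h1]
    erw [Fop_single_neg (p := ⟨fun x => p.1 x + ind a₁ b₁ x, h1⟩) h12]
  · rw [Fop_single_neg h2, map_zero, Fop_single_neg h1, map_zero]

lemma Ecomp_zero₁ {a₁ b₁ a₂ b₂ : ℝ} (ha : a₂ ≤ a₁) (h₁ : a₁ < b₁) (hb : b₁ ≤ b₂)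
    (heq : a₁ = a₂ ∨ b₁ = b₂) : Eop a₁ b₁ ∘ₗ Eop a₂ b₂ = 0 := by
  apply Finsupp.lhom_ext
  intro p k
  rw [LinearMap.comp_apply, LinearMap.zero_apply]
  by_cases h2 : Removable p.1 a₂ b₂
  · rw [Eop_single_pos h2]
    exact Eop_single_neg (not_removable_seq ha h₁ hb heq p.2 h2) _
  · rw [Eop_single_neg h2, map_zero]

lemma Ecomp_zero₂ {a₁ b₁ a₂ b₂ : ℝ} (ha : a₂ ≤ a₁) (h₁ : a₁ < b₁) (hb : b₁ ≤ b₂)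
    (heq : a₁ = a₂ ∨ b₁ = b₂) : Eop a₂ b₂ ∘ₗ Eop a₁ b₁ = 0 := by
  apply Finsupp.lhom_ext
  intro p k
  rw [LinearMap.comp_apply, LinearMap.zero_apply]
  by_cases h1 : Removable p.1 a₁ b₁
  · rw [Eop_single_pos h1]
    exact Eop_single_neg (not_removable_seq' ha h₁ hb heq p.2 h1) _
  · rw [Eop_single_neg h1, map_zero]

lemma Fcomp_zero₁ {a₁ b₁ a₂ b₂ : ℝ} (ha : a₂ ≤ a₁) (h₁ : a₁ < b₁) (hb : b₁ ≤ b₂)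
    (heq : a₁ = a₂ ∨ b₁ = b₂) : Fop a₁ b₁ ∘ₗ Fop a₂ b₂ = 0 := by
  apply Finsupp.lhom_ext
  intro p k
  rw [LinearMap.comp_apply, LinearMap.zero_apply]
  by_cases h2 : Addable p.1 a₂ b₂
  · rw [Fop_single_pos h2]
    exact Fop_single_neg (not_addable_seq ha h₁ hb heq p.2) _
  · rw [Fop_single_neg h2, map_zero]

lemma Fcomp_zero₂ {a₁ b₁ a₂ b₂ : ℝ} (ha : a₂ ≤ a₁) (h₁ : a₁ < b₁) (hb : b₁ ≤ b₂)
    (heq : a₁ = a₂ ∨ b₁ = b₂) : Fop a₂ b₂ ∘ₗ Fop a₁ b₁ = 0 := by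
  apply Finsupp.lhom_ext
  intro p k
  rw [LinearMap.comp_apply, LinearMap.zero_apply]
  by_cases h1 : Addable p.1 a₁ b₁
  · rw [Fop_single_pos h1]
    exact Fop_single_neg (not_addable_seq' ha h₁ hb heq p.2) _
  · rw [Fop_single_neg h1, map_zero]

end Ops
/-- the nest relations
`v^{⟨1_{J₁},1_{J₂}⟩}·E_{J₁}∘E_{J₂} = v^{⟨1_{J₂},1_{J₁}⟩}·E_{J₂}∘E_{J₁}` and
`v^{⟨1_{J₁},1_{J₂}⟩}·F_{J₁}∘F_{J₂} = v^{⟨1_{J₂},1_{J₁}⟩}·F_{J₂}∘F_{J₁}` hold on the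
Fock space whenever `J₁ ⊆ J₂`. -/
theorem fock_nest_relations (a₁ b₁ a₂ b₂ : ℝ) (h₁ : a₁ < b₁) (h₂ : a₂ < b₂)
    (hsub : Set.Ico a₁ b₁ ⊆ Set.Ico a₂ b₂) :
    vK ^ pairZ (indZ a₁ b₁) (indZ a₂ b₂) • (Eop a₁ b₁ ∘ₗ Eop a₂ b₂) =
      vK ^ pairZ (indZ a₂ b₂) (indZ a₁ b₁) • (Eop a₂ b₂ ∘ₗ Eop a₁ b₁) ∧
    vK ^ pairZ (indZ a₁ b₁) (indZ a₂ b₂) • (Fop a₁ b₁ ∘ₗ Fop a₂ b₂) =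
      vK ^ pairZ (indZ a₂ b₂) (indZ a₁ b₁) • (Fop a₂ b₂ ∘ₗ Fop a₁ b₁) := by
  
  obtain ⟨ha, hb⟩ := (Set.Ico_subset_Ico_iff h₁).1 hsub
  by_cases hdeg : a₁ = a₂ ∨ b₁ = b₂
  · constructor
    · rw [Ecomp_zero₁ ha h₁ hb hdeg, Ecomp_zero₂ ha h₁ hb hdeg, smul_zero, smul_zero]
    · rw [Fcomp_zero₁ ha h₁ hb hdeg, Fcomp_zero₂ ha h₁ hb hdeg, smul_zero, smul_zero]
  · push_neg at hdeg
    have ha' : a₂ < a₁ := lt_of_le_of_ne ha (fun h => hdeg.1 h.symm)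
    have hb' : b₁ < b₂ := lt_of_le_of_ne hb hdeg.2
    rw [pairZ_inner_outer ha' h₁ hb', pairZ_outer_inner ha' h₁ hb']
    constructor
    · rw [Ecomp_comm ha' h₁ hb']
    · rw [Fcomp_comm ha' h₁ hb']
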